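/- arXiv:1802.10320 — 2 statements merged into one kernel-verified Lean document; each statement's English description precedes it below -/
import Mathlib

section
/- Let F_opt ∈ ℂ^{n×k}, S ∈ ℂ^{n×m}, C ∈ ℂ^{m×r} with C^H C = I_r, α ∈ ℝ, and F_DD ∈ ℂ^{r×k} with F_DD^H F_DD = α²·(1/α²)I_k being semi-unitary (F_DD^H F_DD = I_k, k ≤ r). Then ‖F_opt − α·S C F_DD‖_F² ≤ ‖F_opt‖_F² − 2α·Re tr(F_DD F_opt^H S C) + α²‖S‖_F². -/
open Matrix

/-- Squared Frobenius norm of a complex matrix. -/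
noncomputable def frobSq {m n : Type*} [Fintype m] [Fintype n] (A : Matrix m n ℂ) : ℝ :=
  ∑ i, ∑ j, ‖A i j‖ ^ 2

lemma frobSq_nonneg {m n : Type*} [Fintype m] [Fintype n] (A : Matrix m n ℂ) : 0 ≤ frobSq A :=
  Finset.sum_nonneg fun _ _ => Finset.sum_nonneg fun _ _ => sq_nonneg _

lemma frobSq_eq_trace {m n : Type*} [Fintype m] [Fintype n] (A : Matrix m n ℂ) :
    frobSq A = (Matrix.trace (Aᴴ * A)).re := by
  rw [frobSq, Matrix.trace, Finset.sum_comm]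
  simp [Matrix.diag, Matrix.mul_apply, Complex.re_sum, conjTranspose_apply,
    ← Complex.normSq_eq_norm_sq, Complex.normSq_eq_conj_mul_self,
    Complex.normSq_apply]

lemma frobSq_mul_le {p q s : Type*} [Fintype p] [Fintype q] [Fintype s] [DecidableEq s]
    (M : Matrix p q ℂ) (F : Matrix q s ℂ) (hF : Fᴴ * F = 1) :
    frobSq (M * F) ≤ frobSq M := by
  have hP : (F * Fᴴ) * (F * Fᴴ) = F * Fᴴ := by
    calc F * Fᴴ * (F * Fᴴ) = F * ((Fᴴ * F) * Fᴴ) := by simp only [Matrix.mul_assoc]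
    _ = F * Fᴴ := by rw [hF, Matrix.one_mul]
  have key : frobSq M = frobSq (M * F) + frobSq (M - M * (F * Fᴴ)) := by
    rw [frobSq_eq_trace M, frobSq_eq_trace, frobSq_eq_trace]
    have e1 : ((M * F)ᴴ * (M * F)).trace = (Mᴴ * M * (F * Fᴴ)).trace := by
      rw [conjTranspose_mul, show Fᴴ * Mᴴ * (M * F) = Fᴴ * (Mᴴ * M * F) by
          simp only [Matrix.mul_assoc], Matrix.trace_mul_comm]
      simp only [Matrix.mul_assoc]
    have e2 : ((M - M * (F * Fᴴ))ᴴ * (M - M * (F * Fᴴ))).trace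
        = (Mᴴ * M).trace - (Mᴴ * M * (F * Fᴴ)).trace := by
      rw [conjTranspose_sub, conjTranspose_mul, conjTranspose_mul,
        conjTranspose_conjTranspose,
        Matrix.sub_mul, Matrix.mul_sub, Matrix.mul_sub, Matrix.trace_sub, Matrix.trace_sub,
        Matrix.trace_sub]
      have c1 : (F * Fᴴ * Mᴴ * M).trace = (Mᴴ * M * (F * Fᴴ)).trace := by
        rw [show F * Fᴴ * Mᴴ * M = (F * Fᴴ) * (Mᴴ * M) by simp only [Matrix.mul_assoc],
          Matrix.trace_mul_comm]
      have c2 : (F * Fᴴ * Mᴴ * (M * (F * Fᴴ))).trace = (Mᴴ * M * (F * Fᴴ)).trace := by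
        rw [show F * Fᴴ * Mᴴ * (M * (F * Fᴴ)) = (F * Fᴴ) * (Mᴴ * (M * (F * Fᴴ))) by
            simp only [Matrix.mul_assoc],
          Matrix.trace_mul_comm,
          show Mᴴ * (M * (F * Fᴴ)) * (F * Fᴴ) = Mᴴ * M * ((F * Fᴴ) * (F * Fᴴ)) by
            simp only [Matrix.mul_assoc],
          hP]
      rw [c1, c2, show (Mᴴ * (M * (F * Fᴴ))).trace = (Mᴴ * M * (F * Fᴴ)).trace by
        simp only [Matrix.mul_assoc]]
      ring
    rw [e1, e2, Complex.sub_re]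
    ring
  rw [key]
  linarith [frobSq_nonneg (M - M * (F * Fᴴ))]

lemma frobSq_sub_smul {p q : Type*} [Fintype p] [Fintype q]
    (A B : Matrix p q ℂ) (α : ℝ) :
    frobSq (A - (α : ℂ) • B) = frobSq A - 2 * α * (Matrix.trace (Bᴴ * A)).re
      + α ^ 2 * frobSq B := by
  rw [frobSq_eq_trace, frobSq_eq_trace, frobSq_eq_trace]
  have hc : ((α : ℂ) • B)ᴴ = (α : ℂ) • Bᴴ := by
    rw [conjTranspose_smul]
    norm_num
  have hre : (Matrix.trace (Aᴴ * B)).re = (Matrix.trace (Bᴴ * A)).re := by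
    have h : Aᴴ * B = (Bᴴ * A)ᴴ := by
      rw [conjTranspose_mul, conjTranspose_conjTranspose]
    rw [h, Matrix.trace_conjTranspose]
    simp
  rw [conjTranspose_sub, hc, Matrix.sub_mul, Matrix.mul_sub, Matrix.mul_sub,
    Matrix.trace_sub, Matrix.trace_sub, Matrix.trace_sub]
  simp only [Matrix.smul_mul, Matrix.mul_smul, Matrix.trace_smul, smul_smul,
    smul_eq_mul, Complex.real_smul, ← Complex.ofReal_mul, Complex.sub_re, Complex.mul_re,
    Complex.ofReal_re, Complex.ofReal_im]
  rw [hre]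
  ring

/-- Lemma 1 of the paper: with `Cᴴ C = I_r` and `F_DD` semi-unitary
(`F_DDᴴ F_DD = I_k`, `k ≤ r`),
`‖F_opt − α·S C F_DD‖_F² ≤ ‖F_opt‖_F² − 2α Re tr(F_DD F_optᴴ S C) + α²‖S‖_F²`. -/
theorem stmt_2 (n m r k : ℕ) (hk : k ≤ r)
    (Fopt : Matrix (Fin n) (Fin k) ℂ) (S : Matrix (Fin n) (Fin m) ℂ)
    (C : Matrix (Fin m) (Fin r) ℂ) (FDD : Matrix (Fin r) (Fin k) ℂ) (α : ℝ)
    (hC : Cᴴ * C = 1) (hF : FDDᴴ * FDD = 1) :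
    frobSq (Fopt - (α : ℂ) • (S * C * FDD)) ≤
      frobSq Fopt - 2 * α * (Matrix.trace (FDD * Foptᴴ * S * C)).re +
        α ^ 2 * frobSq S := by
  rw [frobSq_sub_smul]
  have htr : (Matrix.trace ((S * C * FDD)ᴴ * Fopt)).re
      = (Matrix.trace (FDD * Foptᴴ * S * C)).re := by
    have h1 : (S * C * FDD)ᴴ * Fopt = (Foptᴴ * (S * C * FDD))ᴴ := by
      simp [conjTranspose_mul, Matrix.mul_assoc]
    rw [h1, Matrix.trace_conjTranspose,
      show Foptᴴ * (S * C * FDD) = (Foptᴴ * (S * C)) * FDD by simp only [Matrix.mul_assoc],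
      Matrix.trace_mul_comm,
      show FDD * (Foptᴴ * (S * C)) = FDD * Foptᴴ * S * C by simp only [Matrix.mul_assoc]]
    simp
  have hB : frobSq (S * C * FDD) ≤ frobSq S :=
    le_trans (frobSq_mul_le (S * C) FDD hF) (frobSq_mul_le S C hC)
  have := mul_le_mul_of_nonneg_left hB (sq_nonneg α)
  rw [htr]
  linarith
end

section
/- Let x ∈ ℝ^n and let S(α) denote the set {s ∈ {0,1}^n : s minimizes ‖x − αs‖²}. Then min_{α∈ℝ, s∈{0,1}^n} ‖x − αs‖² = min over the finite candidate set {prefix means of sorted negatives and suffix means of sorted positives restricted to their respective intervals, together with α giving s=0} of the piecewise-quadratic objective; in particular the joint minimum over (α, s) with s ranging over 2^n binary vectors is computable by examining at most n candidate values of α. -/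
open Finset

lemma mean_min_aux (T : Finset ℕ) (x : ℕ → ℝ) (hT : T.Nonempty) (c : ℝ) :
    ∑ j ∈ T, (x j - (∑ j ∈ T, x j) / T.card) ^ 2 ≤ ∑ j ∈ T, (x j - c) ^ 2 := by
  set μ := (∑ j ∈ T, x j) / T.card with hμ
  have hcard : (0 : ℝ) < T.card := by exact_mod_cast Finset.card_pos.mpr hT
  have hsum : ∑ j ∈ T, x j = T.card * μ := by
    rw [hμ]; field_simp
  have key : ∑ j ∈ T, (x j - c) ^ 2 - ∑ j ∈ T, (x j - μ) ^ 2
      = (T.card : ℝ) * (μ - c) ^ 2 := by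
    rw [← Finset.sum_sub_distrib]
    have h1 : ∀ j ∈ T, (x j - c) ^ 2 - (x j - μ) ^ 2
        = (2 * μ - 2 * c) * x j + (c ^ 2 - μ ^ 2) := by intros; ring
    rw [Finset.sum_congr rfl h1, Finset.sum_add_distrib, ← Finset.mul_sum,
      Finset.sum_const, hsum, nsmul_eq_mul]
    ring
  nlinarith [sq_nonneg (μ - c), hcard]

/-- Proposition 1 + Lemma 2: the mixed continuous–binary problem
`min_{α∈ℝ, s∈{0,1}^n} ‖x − αs‖²` reduces to evaluating the piecewise-quadratic
objective `f(α) = min_s ‖x − αs‖²` over the finite candidate set consisting of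
the prefix means, the suffix means, and `α = 0` (which yields `s = 0`). -/
theorem stmt_16 (n : ℕ) (x : ℕ → ℝ)
    (hmono : ∀ j k, 1 ≤ j → j ≤ k → k ≤ n → x j ≤ x k)
    (f : ℝ → ℝ)
    (hf : ∀ α, f α =
      ⨅ s : ℕ → Bool, ∑ j ∈ Finset.Icc 1 n, (x j - α * (if s j then 1 else 0)) ^ 2)
    (A : Finset ℝ)
    (hA : A = insert (0 : ℝ)
      (((Finset.Icc 1 n).image fun i => (∑ j ∈ Finset.Icc 1 i, x j) / (i : ℝ)) ∪
       ((Finset.Icc 1 n).image fun i =>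
          (∑ j ∈ Finset.Icc i n, x j) / ((n : ℝ) - i + 1)))) :
    A.Nonempty ∧ A.card ≤ 2 * n + 1 ∧
      ∀ hA' : A.Nonempty, (⨅ α : ℝ, f α) = A.inf' hA' f := by
  -- f decouples into a sum of pointwise minima
  have hg : ∀ α, f α = ∑ j ∈ Finset.Icc 1 n, min (x j ^ 2) ((x j - α) ^ 2) := by
    intro α
    rw [hf]
    set s₀ : ℕ → Bool := fun j => decide ((x j - α) ^ 2 ≤ x j ^ 2) with hs₀
    apply le_antisymm
    · have hle := ciInf_le (f := fun s : ℕ → Bool =>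
        ∑ j ∈ Finset.Icc 1 n, (x j - α * (if s j then 1 else 0)) ^ 2)
        ⟨0, by rintro _ ⟨s, rfl⟩; positivity⟩ s₀
      refine le_trans hle (le_of_eq ?_)
      refine Finset.sum_congr rfl fun j _ => ?_
      by_cases h : (x j - α) ^ 2 ≤ x j ^ 2
      · simp only [hs₀, h, decide_true, if_true, mul_one]
        exact (min_eq_right h).symm
      · simp only [hs₀, h, decide_false, Bool.false_eq_true, if_false, mul_zero, sub_zero]
        exact (min_eq_left (le_of_lt (lt_of_not_ge h))).symm
    · refine le_ciInf fun s => Finset.sum_le_sum fun j _ => ?_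
      cases hsj : s j
      · simp only [hsj, Bool.false_eq_true, if_false, mul_zero, sub_zero]
        exact min_le_left _ _
      · simp only [hsj, if_true, mul_one]; exact min_le_right _ _
  have hbdd : BddBelow (Set.range f) := by
    refine ⟨0, ?_⟩
    rintro _ ⟨α, rfl⟩
    rw [hg]
    exact Finset.sum_nonneg fun j _ => le_min (sq_nonneg _) (sq_nonneg _)
  -- key: for every α there is a candidate at least as good
  have hcore : ∀ α : ℝ, ∃ a ∈ A, f a ≤ f α := by
    intro α
    rcases lt_trichotomy α 0 with hneg | h0 | hpos
    · -- α < 0 : optimal support is a prefix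
      set T := (Finset.Icc 1 n).filter (fun j => 2 * x j ≤ α) with hTdef
      by_cases hT : T.Nonempty
      · set i := T.max' hT with hidef
        have hiT : i ∈ T := T.max'_mem hT
        have hi1 : 1 ≤ i := (Finset.mem_Icc.mp (Finset.mem_filter.mp hiT).1).1
        have hin : i ≤ n := (Finset.mem_Icc.mp (Finset.mem_filter.mp hiT).1).2
        have hxi : 2 * x i ≤ α := (Finset.mem_filter.mp hiT).2
        have hTeq : T = Finset.Icc 1 i := by
          ext j
          simp only [hTdef, Finset.mem_filter, Finset.mem_Icc]
          constructor
          · rintro ⟨⟨h1, h2⟩, h3⟩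
            exact ⟨h1, T.le_max' j (by simp [hTdef, Finset.mem_filter, Finset.mem_Icc]; exact ⟨⟨h1, h2⟩, h3⟩)⟩
          · rintro ⟨h1, h2⟩
            exact ⟨⟨h1, le_trans h2 hin⟩,
              le_trans (by linarith [hmono j i h1 h2 hin]) hxi⟩
        set μ := (∑ j ∈ Finset.Icc 1 i, x j) / (i : ℝ) with hμdef
        refine ⟨μ, ?_, ?_⟩
        · rw [hA]
          exact Finset.mem_insert_of_mem (Finset.mem_union_left _
            (Finset.mem_image.mpr ⟨i, Finset.mem_Icc.mpr ⟨hi1, hin⟩, rfl⟩))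
        · rw [hg, hg]
          rw [← Finset.sum_filter_add_sum_filter_not (Finset.Icc 1 n) (fun j => 2 * x j ≤ α)
                (fun j => min (x j ^ 2) ((x j - α) ^ 2)),
              ← Finset.sum_filter_add_sum_filter_not (Finset.Icc 1 n) (fun j => 2 * x j ≤ α)
                (fun j => min (x j ^ 2) ((x j - μ) ^ 2))]
          have h2 : ∑ j ∈ (Finset.Icc 1 n).filter (fun j => ¬ 2 * x j ≤ α),
              min (x j ^ 2) ((x j - μ) ^ 2)
              ≤ ∑ j ∈ (Finset.Icc 1 n).filter (fun j => ¬ 2 * x j ≤ α),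
              min (x j ^ 2) ((x j - α) ^ 2) := by
            refine Finset.sum_le_sum fun j hj => ?_
            have hj' : ¬ 2 * x j ≤ α := (Finset.mem_filter.mp hj).2
            have : x j ^ 2 ≤ (x j - α) ^ 2 := by nlinarith
            rw [min_eq_left this]
            exact min_le_left _ _
          have h1 : ∑ j ∈ (Finset.Icc 1 n).filter (fun j => 2 * x j ≤ α),
              min (x j ^ 2) ((x j - μ) ^ 2)
              ≤ ∑ j ∈ (Finset.Icc 1 n).filter (fun j => 2 * x j ≤ α),
              min (x j ^ 2) ((x j - α) ^ 2) := by
            have hstep : ∀ j ∈ (Finset.Icc 1 n).filter (fun j => 2 * x j ≤ α),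
                min (x j ^ 2) ((x j - α) ^ 2) = (x j - α) ^ 2 := by
              intro j hj
              have hj' : 2 * x j ≤ α := (Finset.mem_filter.mp hj).2
              exact min_eq_right (by nlinarith)
            rw [Finset.sum_congr rfl hstep]
            calc ∑ j ∈ (Finset.Icc 1 n).filter (fun j => 2 * x j ≤ α),
                  min (x j ^ 2) ((x j - μ) ^ 2)
                ≤ ∑ j ∈ (Finset.Icc 1 n).filter (fun j => 2 * x j ≤ α), (x j - μ) ^ 2 :=
                  Finset.sum_le_sum fun j _ => min_le_right _ _
              _ ≤ ∑ j ∈ (Finset.Icc 1 n).filter (fun j => 2 * x j ≤ α), (x j - α) ^ 2 := by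
                  show ∑ j ∈ T, (x j - μ) ^ 2 ≤ ∑ j ∈ T, (x j - α) ^ 2
                  rw [hTeq]
                  have hcard : ((Finset.Icc 1 i).card : ℝ) = (i : ℝ) := by
                    rw [Nat.card_Icc]; push_cast; ring
                  have := mean_min_aux (Finset.Icc 1 i) x ⟨1, Finset.mem_Icc.mpr ⟨le_refl 1, hi1⟩⟩ α
                  rwa [hcard, ← hμdef] at this
          linarith
      · -- T empty: f α = f 0
        refine ⟨0, by rw [hA]; exact Finset.mem_insert_self _ _, ?_⟩
        rw [hg, hg]
        refine Finset.sum_le_sum fun j hj => ?_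
        have hj' : ¬ 2 * x j ≤ α := by
          intro hc
          exact hT ⟨j, Finset.mem_filter.mpr ⟨hj, hc⟩⟩
        have : x j ^ 2 ≤ (x j - α) ^ 2 := by nlinarith
        simp only [sub_zero, min_self]
        exact le_min (le_refl _) this
    · exact ⟨0, by rw [hA]; exact Finset.mem_insert_self _ _, by rw [h0]⟩
    · -- α > 0 : optimal support is a suffix
      set T := (Finset.Icc 1 n).filter (fun j => α ≤ 2 * x j) with hTdef
      by_cases hT : T.Nonempty
      · set i := T.min' hT with hidef
        have hiT : i ∈ T := T.min'_mem hT
        have hi1 : 1 ≤ i := (Finset.mem_Icc.mp (Finset.mem_filter.mp hiT).1).1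
        have hin : i ≤ n := (Finset.mem_Icc.mp (Finset.mem_filter.mp hiT).1).2
        have hxi : α ≤ 2 * x i := (Finset.mem_filter.mp hiT).2
        have hTeq : T = Finset.Icc i n := by
          ext j
          simp only [hTdef, Finset.mem_filter, Finset.mem_Icc]
          constructor
          · rintro ⟨⟨h1, h2⟩, h3⟩
            exact ⟨T.min'_le j (by simp [hTdef, Finset.mem_filter, Finset.mem_Icc]; exact ⟨⟨h1, h2⟩, h3⟩), h2⟩
          · rintro ⟨h1, h2⟩
            exact ⟨⟨le_trans hi1 h1, h2⟩,
              le_trans hxi (by linarith [hmono i j hi1 h1 h2])⟩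
        set μ := (∑ j ∈ Finset.Icc i n, x j) / ((n : ℝ) - i + 1) with hμdef
        refine ⟨μ, ?_, ?_⟩
        · rw [hA]
          exact Finset.mem_insert_of_mem (Finset.mem_union_right _
            (Finset.mem_image.mpr ⟨i, Finset.mem_Icc.mpr ⟨hi1, hin⟩, rfl⟩))
        · rw [hg, hg]
          rw [← Finset.sum_filter_add_sum_filter_not (Finset.Icc 1 n) (fun j => α ≤ 2 * x j)
                (fun j => min (x j ^ 2) ((x j - α) ^ 2)),
              ← Finset.sum_filter_add_sum_filter_not (Finset.Icc 1 n) (fun j => α ≤ 2 * x j)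
                (fun j => min (x j ^ 2) ((x j - μ) ^ 2))]
          have h2 : ∑ j ∈ (Finset.Icc 1 n).filter (fun j => ¬ α ≤ 2 * x j),
              min (x j ^ 2) ((x j - μ) ^ 2)
              ≤ ∑ j ∈ (Finset.Icc 1 n).filter (fun j => ¬ α ≤ 2 * x j),
              min (x j ^ 2) ((x j - α) ^ 2) := by
            refine Finset.sum_le_sum fun j hj => ?_
            have hj' : ¬ α ≤ 2 * x j := (Finset.mem_filter.mp hj).2
            have : x j ^ 2 ≤ (x j - α) ^ 2 := by nlinarith
            rw [min_eq_left this]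
            exact min_le_left _ _
          have h1 : ∑ j ∈ (Finset.Icc 1 n).filter (fun j => α ≤ 2 * x j),
              min (x j ^ 2) ((x j - μ) ^ 2)
              ≤ ∑ j ∈ (Finset.Icc 1 n).filter (fun j => α ≤ 2 * x j),
              min (x j ^ 2) ((x j - α) ^ 2) := by
            have hstep : ∀ j ∈ (Finset.Icc 1 n).filter (fun j => α ≤ 2 * x j),
                min (x j ^ 2) ((x j - α) ^ 2) = (x j - α) ^ 2 := by
              intro j hj
              have hj' : α ≤ 2 * x j := (Finset.mem_filter.mp hj).2
              exact min_eq_right (by nlinarith)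
            rw [Finset.sum_congr rfl hstep]
            calc ∑ j ∈ (Finset.Icc 1 n).filter (fun j => α ≤ 2 * x j),
                  min (x j ^ 2) ((x j - μ) ^ 2)
                ≤ ∑ j ∈ (Finset.Icc 1 n).filter (fun j => α ≤ 2 * x j), (x j - μ) ^ 2 :=
                  Finset.sum_le_sum fun j _ => min_le_right _ _
              _ ≤ ∑ j ∈ (Finset.Icc 1 n).filter (fun j => α ≤ 2 * x j), (x j - α) ^ 2 := by
                  show ∑ j ∈ T, (x j - μ) ^ 2 ≤ ∑ j ∈ T, (x j - α) ^ 2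
                  rw [hTeq]
                  have hcard : ((Finset.Icc i n).card : ℝ) = (n : ℝ) - i + 1 := by
                    rw [Nat.card_Icc, Nat.cast_sub (by omega)]; push_cast; ring
                  have := mean_min_aux (Finset.Icc i n) x ⟨i, Finset.mem_Icc.mpr ⟨le_refl i, hin⟩⟩ α
                  rwa [hcard, ← hμdef] at this
          linarith
      · refine ⟨0, by rw [hA]; exact Finset.mem_insert_self _ _, ?_⟩
        rw [hg, hg]
        refine Finset.sum_le_sum fun j hj => ?_
        have hj' : ¬ α ≤ 2 * x j := by
          intro hc
          exact hT ⟨j, Finset.mem_filter.mpr ⟨hj, hc⟩⟩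
        have : x j ^ 2 ≤ (x j - α) ^ 2 := by nlinarith
        simp only [sub_zero, min_self]
        exact le_min (le_refl _) this
  refine ⟨by rw [hA]; exact Finset.insert_nonempty _ _, ?_, ?_⟩
  · rw [hA]
    refine le_trans (Finset.card_insert_le _ _) ?_
    have h1 := Finset.card_union_le
      ((Finset.Icc 1 n).image fun i => (∑ j ∈ Finset.Icc 1 i, x j) / (i : ℝ))
      ((Finset.Icc 1 n).image fun i => (∑ j ∈ Finset.Icc i n, x j) / ((n : ℝ) - i + 1))
    have h2 := Finset.card_image_le (s := Finset.Icc 1 n)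
      (f := fun i => (∑ j ∈ Finset.Icc 1 i, x j) / (i : ℝ))
    have h3 := Finset.card_image_le (s := Finset.Icc 1 n)
      (f := fun i => (∑ j ∈ Finset.Icc i n, x j) / ((n : ℝ) - i + 1))
    have h4 : (Finset.Icc 1 n).card = n := by rw [Nat.card_Icc]; omega
    omega
  · intro hA'
    apply le_antisymm
    · obtain ⟨a, haA, ha⟩ := Finset.exists_mem_eq_inf' hA' f
      rw [ha]
      exact ciInf_le hbdd a
    · refine le_ciInf fun α => ?_
      obtain ⟨a, haA, hle⟩ := hcore α
      exact le_trans (Finset.inf'_le f haA) hle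
end
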